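/- Let d ≥ 1, c_r ∈ [0,1), and 0 < c_g < c_PT, and define ξ₀ := (c_PT/(c_PT − c_g)) · e^{c_g c_r/(1−c_r)}/(1−c_r)² and ξ_∂ := (e^{c_g c_r/(1−c_r)}/(c_PT − c_g)) · (1 + c_PT c_r/(1−c_r)²). Let g_1, …, g_{N_g} : ℝ^d → ℝ be differentiable with g := Σ_i g_i² satisfying ‖∇g(x)‖ ≤ L_g for all x ∈ ℝ^d, and let h_1, …, h_{N_h} : ℝ^d → ℝ be differentiable with ‖∇h_j(x)‖ ≤ L_{h,j} for all x and all j, and with h_j(𝒯(0)) ≥ 0 for all j. Let v : [0,1] × ℝ^d → ℝ^d satisfy ‖v(t,x)‖ ≤ v̄ for all t, x, and let 𝒯 : [0,1] → ℝ^d solve the unconstrained flow 𝒯'(t) = v(t, 𝒯(t)). Define ḡ(t) := e^{c_g − c_g/(1−t)} ḡ(0) and h̄_j(t) := e^{c_g − c_g/(1−t)} h̄_j(0), and the time-varying gain γ_t(a) := c_PT a/(1−t)². If the initial values satisfy ḡ(0) ≥ ξ₀ g(𝒯(0)) + ξ_∂ L_g v̄ and h̄_j(0) ≥ ξ₀ h_j(𝒯(0))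 + ξ_∂ L_{h,j} v̄ for all j, then for every t ∈ [0, c_r]: (d/dt) g(𝒯(t)) ≤ γ_t(ḡ(t) − g(𝒯(t))) + ḡ'(t) and (d/dt) h_j(𝒯(t)) ≤ γ_t(h̄_j(t) − h_j(𝒯(t))) + h̄_j'(t) for all j; consequently the zero guidance input u_t = 0 satisfies all constraints of the guidance quadratic program, so free (unguided) generation is optimal throughout the early stage [0, c_r]. -/

import Mathlib

open Set Filter
open scoped InnerProductSpace

lemma uniconflow_chain {d : ℕ} (f : EuclideanSpace ℝ (Fin d) → ℝ) (hf : Differentiable ℝ f)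
    (v : ℝ → EuclideanSpace ℝ (Fin d) → EuclideanSpace ℝ (Fin d))
    (traj : ℝ → EuclideanSpace ℝ (Fin d))
    (hflow : ∀ t ∈ Set.Icc (0:ℝ) 1, HasDerivWithinAt traj (v t (traj t)) (Set.Icc 0 1) t)
    {t : ℝ} (ht : t ∈ Set.Icc (0:ℝ) 1) :
    HasDerivWithinAt (fun s => f (traj s))
      (⟪gradient f (traj t), v t (traj t)⟫_ℝ) (Set.Icc 0 1) t := by
  have h1 := ((hf (traj t)).hasGradientAt).hasFDerivAt
  have h2 := h1.comp_hasDerivWithinAt t (hflow t ht)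
  simpa [InnerProductSpace.toDual_apply_apply, Function.comp_def] using h2

set_option maxHeartbeats 1000000 in
lemma uniconflow_key {d : ℕ}
    (c_r c_g c_PT : ℝ)
    (hcr : c_r ∈ Set.Ico (0:ℝ) 1) (hcg : 0 < c_g) (hcgPT : c_g < c_PT)
    (ξ₀ ξd : ℝ)
    (hξ₀ : ξ₀ = c_PT / (c_PT - c_g) * Real.exp (c_g * c_r / (1 - c_r)) / (1 - c_r) ^ 2)
    (hξd : ξd = Real.exp (c_g * c_r / (1 - c_r)) / (c_PT - c_g)
        * (1 + c_PT * c_r / (1 - c_r) ^ 2))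
    (f : EuclideanSpace ℝ (Fin d) → ℝ) (hf : Differentiable ℝ f)
    (L : ℝ) (hL : ∀ x, ‖gradient f x‖ ≤ L)
    (v : ℝ → EuclideanSpace ℝ (Fin d) → EuclideanSpace ℝ (Fin d))
    (vbar : ℝ) (hv : ∀ t x, ‖v t x‖ ≤ vbar)
    (traj : ℝ → EuclideanSpace ℝ (Fin d))
    (hflow : ∀ t ∈ Set.Icc (0:ℝ) 1, HasDerivWithinAt traj (v t (traj t)) (Set.Icc 0 1) t)
    (hf0 : 0 ≤ f (traj 0))
    (bar0 : ℝ) (bar : ℝ → ℝ)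
    (hbar : ∀ t, bar t = Real.exp (c_g - c_g / (1 - t)) * bar0)
    (hinit : ξ₀ * f (traj 0) + ξd * L * vbar ≤ bar0)
    {t : ℝ} (ht : t ∈ Set.Icc (0:ℝ) c_r) :
    derivWithin (fun s => f (traj s)) (Set.Icc 0 1) t
      ≤ c_PT * (bar t - f (traj t)) / (1 - t) ^ 2 + deriv bar t := by
  obtain ⟨ht0, htcr⟩ := ht
  have h1t : 0 < 1 - t := by linarith [hcr.2]
  have h1cr : 0 < 1 - c_r := by linarith [hcr.2]
  have htt : t ∈ Set.Icc (0:ℝ) 1 := ⟨ht0, by linarith⟩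
  have hvb : 0 ≤ vbar := le_trans (norm_nonneg _) (hv 0 (traj 0))
  have hLnn : 0 ≤ L := le_trans (norm_nonneg _) (hL (traj 0))
  have hLvnn : 0 ≤ L * vbar := mul_nonneg hLnn hvb
  have hPTg : 0 < c_PT - c_g := by linarith
  have hPT : 0 < c_PT := by linarith
  have hKpos : (0:ℝ) < Real.exp (c_g * c_r / (1 - c_r)) := Real.exp_pos _
  have hKne : Real.exp (c_g * c_r / (1 - c_r)) ≠ 0 := hKpos.ne'
  have hne1 : c_PT - c_g ≠ 0 := hPTg.ne'
  have hne2 : (1:ℝ) - c_r ≠ 0 := h1cr.ne'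
  have hne3 : (1:ℝ) - t ≠ 0 := h1t.ne'
  -- derivative bound along the flow
  have hbd : ∀ s ∈ Set.Icc (0:ℝ) 1,
      ‖(⟪gradient f (traj s), v s (traj s)⟫_ℝ)‖ ≤ L * vbar := by
    intro s hs
    refine le_trans (abs_real_inner_le_norm _ _) ?_
    exact mul_le_mul (hL _) (hv _ _) (norm_nonneg _) hLnn
  -- derivWithin value
  have hD : derivWithin (fun s => f (traj s)) (Set.Icc 0 1) t
      = ⟪gradient f (traj t), v t (traj t)⟫_ℝ :=
    (uniconflow_chain f hf v traj hflow htt).derivWithin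
      ((uniqueDiffOn_Icc one_pos) t htt)
  have hDle : derivWithin (fun s => f (traj s)) (Set.Icc 0 1) t ≤ L * vbar := by
    rw [hD]
    exact le_trans (le_abs_self _) (hbd t htt)
  -- growth bound on f ∘ traj
  have hgrow : f (traj t) ≤ f (traj 0) + L * vbar * c_r := by
    have h1 := Convex.norm_image_sub_le_of_norm_hasDerivWithin_le
      (f' := fun s => (⟪gradient f (traj s), v s (traj s)⟫_ℝ))
      (fun s hs => uniconflow_chain f hf v traj hflow hs) hbd (convex_Icc 0 1)
      (left_mem_Icc.2 zero_le_one) htt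
    have h2 : f (traj t) - f (traj 0) ≤ L * vbar * |t - 0| :=
      le_trans (le_abs_self _) h1
    rw [sub_zero, abs_of_nonneg ht0] at h2
    nlinarith [mul_le_mul_of_nonneg_left htcr hLvnn]
  -- derivative of bar
  have hbarEq : bar = fun s => Real.exp (c_g - c_g / (1 - s)) * bar0 := funext hbar
  have hbarD : HasDerivAt bar
      (Real.exp (c_g - c_g / (1 - t)) * (-(c_g / (1 - t) ^ 2)) * bar0) t := by
    rw [hbarEq]
    have h1 : HasDerivAt (fun s : ℝ => 1 - s) (-1) t := by
      simpa using (hasDerivAt_id t).const_sub 1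
    have h2 : HasDerivAt (fun s : ℝ => c_g / (1 - s)) (c_g / (1 - t) ^ 2) t := by
      have this : HasDerivAt (fun s : ℝ => c_g / (1 - s)) ((0 * (1 - t) - c_g * -1) / (1 - t) ^ 2) t :=
        (hasDerivAt_const t c_g).div h1 hne3
      convert this using 1; ring
    have h3 : HasDerivAt (fun s : ℝ => c_g - c_g / (1 - s)) (-(c_g / (1 - t) ^ 2)) t :=
      h2.const_sub c_g
    exact (h3.exp).mul_const bar0
  have hbarderiv : deriv bar t
      = Real.exp (c_g - c_g / (1 - t)) * (-(c_g / (1 - t) ^ 2)) * bar0 := hbarD.deriv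
  -- nonnegativity of ξ₀, ξd, bar0
  have hq : (0:ℝ) ≤ 1 + c_PT * c_r / (1 - c_r) ^ 2 := by
    have : (0:ℝ) ≤ c_PT * c_r / (1 - c_r) ^ 2 :=
      div_nonneg (mul_nonneg hPT.le hcr.1) (sq_nonneg _)
    linarith
  have hξ₀nn : 0 ≤ ξ₀ := by
    rw [hξ₀]
    have : (0:ℝ) ≤ c_PT / (c_PT - c_g) := div_nonneg hPT.le hPTg.le
    positivity
  have hξdnn : 0 ≤ ξd := by
    rw [hξd]
    exact mul_nonneg (div_nonneg hKpos.le hPTg.le) hq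
  have hbar0nn : 0 ≤ bar0 := by
    have h1 : 0 ≤ ξ₀ * f (traj 0) := mul_nonneg hξ₀nn hf0
    have h2 : 0 ≤ ξd * L * vbar := mul_nonneg (mul_nonneg hξdnn hLnn) hvb
    linarith
  -- lower bound on bar t
  have hexp_mono : (Real.exp (c_g * c_r / (1 - c_r)))⁻¹ ≤ Real.exp (c_g - c_g / (1 - t)) := by
    rw [← Real.exp_neg]
    apply Real.exp_le_exp.2
    have e : c_g - c_g / (1 - t) = -(c_g * t / (1 - t)) := by field_simp; ring
    rw [e, neg_le_neg_iff]
    rw [div_le_div_iff₀ h1t h1cr]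
    nlinarith [mul_nonneg hcg.le (sub_nonneg.2 htcr)]
  have hbart : (Real.exp (c_g * c_r / (1 - c_r)))⁻¹ * bar0 ≤ bar t := by
    rw [hbar t]
    exact mul_le_mul_of_nonneg_right hexp_mono hbar0nn
  -- the key inequality after multiplying by (c_PT - c_g)
  have hEq : (c_PT - c_g) * ((Real.exp (c_g * c_r / (1 - c_r)))⁻¹
        * (ξ₀ * f (traj 0) + ξd * L * vbar))
      = c_PT * f (traj 0) / (1 - c_r) ^ 2
        + (1 + c_PT * c_r / (1 - c_r) ^ 2) * (L * vbar) := by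
    rw [hξ₀, hξd]
    field_simp
  have hkey : c_PT * f (traj 0) / (1 - c_r) ^ 2
      + (1 + c_PT * c_r / (1 - c_r) ^ 2) * (L * vbar) ≤ (c_PT - c_g) * bar t := by
    rw [← hEq]
    apply mul_le_mul_of_nonneg_left _ hPTg.le
    calc (Real.exp (c_g * c_r / (1 - c_r)))⁻¹ * (ξ₀ * f (traj 0) + ξd * L * vbar)
        ≤ (Real.exp (c_g * c_r / (1 - c_r)))⁻¹ * bar0 :=
          mul_le_mul_of_nonneg_left hinit (inv_nonneg.2 hKpos.le)
      _ ≤ bar t := hbart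
  -- comparison facts
  have hcr2 : (1 - c_r) ^ 2 ≤ 1 := by nlinarith [hcr.1, hcr.2]
  have ht2 : (1 - t) ^ 2 ≤ 1 := by nlinarith
  have hcr2pos : (0:ℝ) < (1 - c_r) ^ 2 := by positivity
  have hinv : (1:ℝ) ≤ ((1 - c_r) ^ 2)⁻¹ := (one_le_inv₀ hcr2pos).2 hcr2
  have h5 : c_PT * f (traj 0) ≤ c_PT * f (traj 0) / (1 - c_r) ^ 2 := by
    rw [div_eq_mul_inv]
    exact le_mul_of_one_le_right (mul_nonneg hPT.le hf0) hinv
  have h6 : c_PT * c_r * (L * vbar) ≤ c_PT * c_r / (1 - c_r) ^ 2 * (L * vbar) := by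
    refine mul_le_mul_of_nonneg_right ?_ hLvnn
    rw [div_eq_mul_inv]
    exact le_mul_of_one_le_right (mul_nonneg hPT.le hcr.1) hinv
  have a1 : L * vbar * (1 - t) ^ 2 ≤ L * vbar := by
    nlinarith [mul_le_mul_of_nonneg_left ht2 hLvnn]
  have a2 : c_PT * f (traj t) ≤ c_PT * (f (traj 0) + L * vbar * c_r) :=
    mul_le_mul_of_nonneg_left hgrow hPT.le
  have hcore : L * vbar * (1 - t) ^ 2 + c_PT * f (traj t) ≤ (c_PT - c_g) * bar t := by
    nlinarith [hkey, a1, a2, h5, h6]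
  -- conclude
  rw [hbarderiv]
  have hbart_eq : Real.exp (c_g - c_g / (1 - t)) * bar0 = bar t := (hbar t).symm
  have h1t2 : (0:ℝ) < (1 - t) ^ 2 := by positivity
  have hfin : c_PT * (bar t - f (traj t)) / (1 - t) ^ 2
      + Real.exp (c_g - c_g / (1 - t)) * (-(c_g / (1 - t) ^ 2)) * bar0
      = ((c_PT - c_g) * bar t - c_PT * f (traj t)) / (1 - t) ^ 2 := by
    rw [mul_comm (Real.exp (c_g - c_g / (1 - t))) _, mul_assoc, hbart_eq]
    field_simp
    ring
  rw [hfin, le_div_iff₀ h1t2]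
  nlinarith [mul_le_mul_of_nonneg_right hDle (sq_nonneg (1 - t)), hcore]


/-- Theorem 5 (free generation in the early stage): along the unconstrained flow
`traj' t = v t (traj t)` with bounded velocity field, Lipschitz constraint
functions, and PTZF references `gbar`, `hbar j` with sufficiently large initial
values, the prescribed-time differential inequalities (with time-varying gain
`a ↦ c_PT · a / (1-t)²`) hold with zero guidance input throughout the early
stage `[0, c_r]`. -/
theorem free_generation_early_stage
    {d Ng Nh : ℕ} (hd : 1 ≤ d)
    (c_r c_g c_PT : ℝ)
    (hcr : c_r ∈ Set.Ico (0:ℝ) 1) (hcg : 0 < c_g) (hcgPT : c_g < c_PT)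
    (ξ₀ ξd : ℝ)
    (hξ₀ : ξ₀ = c_PT / (c_PT - c_g) * Real.exp (c_g * c_r / (1 - c_r)) / (1 - c_r) ^ 2)
    (hξd : ξd = Real.exp (c_g * c_r / (1 - c_r)) / (c_PT - c_g)
        * (1 + c_PT * c_r / (1 - c_r) ^ 2))
    (g : Fin Ng → EuclideanSpace ℝ (Fin d) → ℝ) (hg : ∀ i, Differentiable ℝ (g i))
    (G : EuclideanSpace ℝ (Fin d) → ℝ) (hGdef : ∀ x, G x = ∑ i, (g i x) ^ 2)
    (L_g : ℝ) (hLg : ∀ x, ‖gradient G x‖ ≤ L_g)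
    (h : Fin Nh → EuclideanSpace ℝ (Fin d) → ℝ) (hh : ∀ j, Differentiable ℝ (h j))
    (L_h : Fin Nh → ℝ) (hLh : ∀ j x, ‖gradient (h j) x‖ ≤ L_h j)
    (v : ℝ → EuclideanSpace ℝ (Fin d) → EuclideanSpace ℝ (Fin d))
    (vbar : ℝ) (hv : ∀ t x, ‖v t x‖ ≤ vbar)
    (traj : ℝ → EuclideanSpace ℝ (Fin d))
    (hflow : ∀ t ∈ Set.Icc (0:ℝ) 1, HasDerivWithinAt traj (v t (traj t)) (Set.Icc 0 1) t)
    (hh0 : ∀ j, 0 ≤ h j (traj 0))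
    (gbar0 : ℝ) (hbar0 : Fin Nh → ℝ)
    (gbar : ℝ → ℝ) (hgbar : ∀ t, gbar t = Real.exp (c_g - c_g / (1 - t)) * gbar0)
    (hbar : Fin Nh → ℝ → ℝ)
    (hhbar : ∀ j t, hbar j t = Real.exp (c_g - c_g / (1 - t)) * hbar0 j)
    (hinit_g : ξ₀ * G (traj 0) + ξd * L_g * vbar ≤ gbar0)
    (hinit_h : ∀ j, ξ₀ * h j (traj 0) + ξd * L_h j * vbar ≤ hbar0 j) :
    ∀ t ∈ Set.Icc (0:ℝ) c_r,
      (derivWithin (fun s => G (traj s)) (Set.Icc 0 1) t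
          ≤ c_PT * (gbar t - G (traj t)) / (1 - t) ^ 2 + deriv gbar t) ∧
      ∀ j, derivWithin (fun s => h j (traj s)) (Set.Icc 0 1) t
          ≤ c_PT * (hbar j t - h j (traj t)) / (1 - t) ^ 2 + deriv (hbar j) t := by
  have hGeq : G = fun x => ∑ i, (g i x) ^ 2 := funext hGdef
  have hG : Differentiable ℝ G := by
    rw [hGeq]
    exact Differentiable.fun_sum fun i _ => (hg i).pow 2
  have hG0 : 0 ≤ G (traj 0) := by
    rw [hGdef]
    exact Finset.sum_nonneg fun i _ => sq_nonneg _
  intro t ht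
  refine ⟨?_, fun j => ?_⟩
  · exact uniconflow_key c_r c_g c_PT hcr hcg hcgPT ξ₀ ξd hξ₀ hξd G hG L_g hLg
      v vbar hv traj hflow hG0 gbar0 gbar hgbar hinit_g ht
  · exact uniconflow_key c_r c_g c_PT hcr hcg hcgPT ξ₀ ξd hξ₀ hξd (h j) (hh j)
      (L_h j) (hLh j) v vbar hv traj hflow (hh0 j) (hbar0 j) (hbar j) (hhbar j)
      (hinit_h j) ht
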